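/- Soundness of G: every sequent provable in the sequent calculus G is valid; that is, if Γ ⊢_G Δ then for every hybrid data model M, if M ⊩ γ for all γ ∈ Γ then M ⊩ δ for some δ ∈ Δ. -/

import Mathlib

namespace HXPathD

mutual
  inductive Path (P N M C : Type) : Type where
    | mod  : M → Path P N M C
    | nom  : N → Path P N M C
    | test : Node P N M C → Path P N M C
    | comp : Path P N M C → Path P N M C → Path P N M C

  inductive Node (P N M C : Type) : Type where
    | prop : P → Node P N M C
    | nom  : N → Node P N M C
    | bot  : Node P N M C
    | impl : Node P N M C → Node P N M C → Node P N M C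
    | at   : N → Node P N M C → Node P N M C
    | dia  : M → Node P N M C → Node P N M C
    | eq   : Path P N M C → C → Path P N M C → Node P N M C
    | neq  : Path P N M C → C → Path P N M C → Node P N M C
end

variable {P N M C : Type}

/-- Abbreviations. -/
def Node.neg (φ : Node P N M C) : Node P N M C := .impl φ .bot
def Node.top : Node P N M C := .impl .bot .bot
def Node.and (φ ψ : Node P N M C) : Node P N M C := .neg (.impl φ (.neg ψ))
def Node.iff (φ ψ : Node P N M C) : Node P N M C := .and (.impl φ ψ) (.impl ψ φ)
def Node.box (a : M) (φ : Node P N M C) : Node P N M C := .neg (.dia a (.neg φ))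
def Path.eps : Path P N M C := .test .top

/-- The node expression ⟨α⟩φ, obtained by the abbreviations
    ⟨j:⟩φ := @_jφ, ⟨ψ?⟩φ := ψ∧φ, ⟨αβ⟩φ := ⟨α⟩⟨β⟩φ (with ⟨a⟩φ primitive). -/
def Path.dia : Path P N M C → Node P N M C → Node P N M C
  | .mod a, φ => .dia a φ
  | .nom j, φ => .at j φ
  | .test ψ, φ => .and ψ φ
  | .comp α β, φ => α.dia (β.dia φ)

/-- A comparison ▲ ∈ {=_c, ≠_c : c ∈ Cmp}. -/
inductive Comparison (C : Type) : Type where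
  | ceq  : C → Comparison C
  | cneq : C → Comparison C

/-- The node expression ⟨α ▲ β⟩. -/
def Comparison.node : Comparison C → Path P N M C → Path P N M C → Node P N M C
  | .ceq c, α, β => .eq α c β
  | .cneq c, α, β => .neq α c β

/-- A hybrid data model. -/
structure Model (P N M C : Type) where
  W : Type
  nonempty : Nonempty W
  R : M → W → W → Prop
  E : C → W → W → Prop
  E_equiv : ∀ c, Equivalence (E c)
  g : N → W
  V : P → W → Prop

mutual
  def Model.satPath (𝔐 : Model P N M C) : Path P N M C → 𝔐.W → 𝔐.W → Prop
    | .mod a, n, n' => 𝔐.R a n n'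
    | .nom i, _, n' => 𝔐.g i = n'
    | .test φ, n, n' => n = n' ∧ 𝔐.sat φ n
    | .comp α β, n, n' => ∃ n'', 𝔐.satPath α n n'' ∧ 𝔐.satPath β n'' n'

  def Model.sat (𝔐 : Model P N M C) : Node P N M C → 𝔐.W → Prop
    | .prop p, n => 𝔐.V p n
    | .nom i, n => 𝔐.g i = n
    | .bot, _ => False
    | .impl φ ψ, n => 𝔐.sat φ n → 𝔐.sat ψ n
    | .at i φ, _ => 𝔐.sat φ (𝔐.g i)
    | .dia a φ, n => ∃ n', 𝔐.R a n n' ∧ 𝔐.sat φ n'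
    | .eq α c β, n => ∃ n' n'', 𝔐.satPath α n n' ∧ 𝔐.satPath β n n'' ∧ 𝔐.E c n' n''
    | .neq α c β, n => ∃ n' n'', 𝔐.satPath α n n' ∧ 𝔐.satPath β n n'' ∧ ¬ 𝔐.E c n' n''
end

mutual
  def Path.noms : Path P N M C → Set N
    | .mod _ => ∅
    | .nom i => {i}
    | .test φ => φ.noms
    | .comp α β => α.noms ∪ β.noms

  def Node.noms : Node P N M C → Set N
    | .prop _ => ∅
    | .nom i => {i}
    | .bot => ∅
    | .impl φ ψ => φ.noms ∪ ψ.noms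
    | .at i φ => insert i φ.noms
    | .dia _ φ => φ.noms
    | .eq α _ β => α.noms ∪ β.noms
    | .neq α _ β => α.noms ∪ β.noms
end

/-- Node expressions of the admissible forms for sequents:
    ⟨i: ▲ j:⟩ or @_iφ. -/
def Node.Admissible : Node P N M C → Prop
  | .at _ _ => True
  | .eq (.nom _) _ (.nom _) => True
  | .neq (.nom _) _ (.nom _) => True
  | _ => False

/-- A sequent: antecedent and consequent. -/
abbrev Sequent (P N M C : Type) := Set (Node P N M C) × Set (Node P N M C)

/-- The nominal `j` does not occur in the set `S`. -/
def FreshIn (j : N) (S : Set (Node P N M C)) : Prop := ∀ φ ∈ S, j ∉ φ.noms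

/-- Shape restriction on the axiom (Ax). -/
inductive AxForm : Node P N M C → Prop where
  | prop (i : N) (p : P) : AxForm (.at i (.prop p))
  | nom (i j : N) : AxForm (.at i (.nom j))
  | eq (i : N) (c : C) (j : N) : AxForm (.eq (.nom i) c (.nom j))

/-- Shape restriction on the rule (S1): φ is p, ⊥ or ⟨a⟩k. -/
inductive S1Form : Node P N M C → Prop where
  | prop (p : P) : S1Form (.prop p)
  | bot : S1Form .bot
  | dia (a : M) (k : N) : S1Form (.dia a (.nom k))

/-- One rule instance of the sequent calculus G: `Step cut prems concl` holds iff
    `concl` may be inferred from the premisses `prems` by a rule of G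
    (when `cut = false`, the rule (Cut) is excluded). -/
inductive Step (cut : Bool) : List (Sequent P N M C) → Sequent P N M C → Prop where
  | ax {Γ Δ : Set (Node P N M C)} {φ} (h : AxForm φ) :
      Step cut [] (insert φ Γ, insert φ Δ)
  | bot {Γ Δ : Set (Node P N M C)} (i : N) :
      Step cut [] (insert (.at i .bot) Γ, Δ)
  | implL {Γ Δ : Set (Node P N M C)} (i : N) (φ ψ : Node P N M C) :
      Step cut [(Γ, insert (.at i φ) Δ), (insert (.at i ψ) Γ, Δ)]
        (insert (.at i (.impl φ ψ)) Γ, Δ)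
  | implR {Γ Δ : Set (Node P N M C)} (i : N) (φ ψ : Node P N M C) :
      Step cut [(insert (.at i φ) Γ, insert (.at i ψ) Δ)]
        (Γ, insert (.at i (.impl φ ψ)) Δ)
  | atT {Γ Δ : Set (Node P N M C)} (i : N) :
      Step cut [(insert (.at i (.nom i)) Γ, Δ)] (Γ, Δ)
  | at5 {Γ Δ : Set (Node P N M C)} (i j k : N) :
      Step cut
        [(insert (.at j (.nom k)) (insert (.at i (.nom j)) (insert (.at i (.nom k)) Γ)), Δ)]
        (insert (.at i (.nom j)) (insert (.at i (.nom k)) Γ), Δ)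
  | nomRule {Γ Δ : Set (Node P N M C)} (i j : N)
      (hj : FreshIn j Γ) (hj' : FreshIn j Δ) :
      Step cut [(insert (.at i (.nom j)) Γ, Δ)] (Γ, Δ)
  | s1 {Γ Δ : Set (Node P N M C)} (i j : N) {φ : Node P N M C} (h : S1Form φ) :
      Step cut
        [(insert (.at j φ) (insert (.at i (.nom j)) (insert (.at i φ) Γ)), Δ)]
        (insert (.at i (.nom j)) (insert (.at i φ) Γ), Δ)
  | s2 {Γ Δ : Set (Node P N M C)} (i j k : N) (a : M) :
      Step cut
        [(insert (.at i (.dia a (.nom k)))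
            (insert (.at j (.nom k)) (insert (.at i (.dia a (.nom j))) Γ)), Δ)]
        (insert (.at j (.nom k)) (insert (.at i (.dia a (.nom j))) Γ), Δ)
  | s3 {Γ Δ : Set (Node P N M C)} (i j k : N) (c : C) :
      Step cut
        [(insert (.eq (.nom j) c (.nom k))
            (insert (.at i (.nom j)) (insert (.eq (.nom i) c (.nom k)) Γ)), Δ)]
        (insert (.at i (.nom j)) (insert (.eq (.nom i) c (.nom k)) Γ), Δ)
  | atL {Γ Δ : Set (Node P N M C)} (i j : N) (φ : Node P N M C) :
      Step cut [(insert (.at i φ) Γ, Δ)] (insert (.at j (.at i φ)) Γ, Δ)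
  | atR {Γ Δ : Set (Node P N M C)} (i j : N) (φ : Node P N M C) :
      Step cut [(Γ, insert (.at i φ) Δ)] (Γ, insert (.at j (.at i φ)) Δ)
  | diaL {Γ Δ : Set (Node P N M C)} (i j : N) (a : M) (φ : Node P N M C)
      (hj : FreshIn j (insert (.at i (.dia a φ)) Γ)) (hj' : FreshIn j Δ) :
      Step cut
        [(insert (.at i (.dia a (.nom j))) (insert (.at j φ) Γ), Δ)]
        (insert (.at i (.dia a φ)) Γ, Δ)
  | diaR {Γ Δ : Set (Node P N M C)} (i j : N) (a : M) (φ : Node P N M C) :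
      Step cut
        [(insert (.at i (.dia a (.nom j))) Γ,
          insert (.at i (.dia a φ)) (insert (.at j φ) Δ))]
        (insert (.at i (.dia a (.nom j))) Γ, insert (.at i (.dia a φ)) Δ)
  | cmpL {Γ Δ : Set (Node P N M C)} (i j k : N) (α β : Path P N M C)
      (b : Comparison C) (hjk : j ≠ k)
      (hj : FreshIn j (insert (.at i (b.node α β)) Γ)) (hj' : FreshIn j Δ)
      (hk : FreshIn k (insert (.at i (b.node α β)) Γ)) (hk' : FreshIn k Δ) :
      Step cut
        [(insert (.at i (α.dia (.nom j)))
            (insert (.at i (β.dia (.nom k)))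
              (insert (b.node (.nom j) (.nom k)) Γ)), Δ)]
        (insert (.at i (b.node α β)) Γ, Δ)
  | cmpR {Γ Δ : Set (Node P N M C)} (i j k : N) (α β : Path P N M C)
      (b : Comparison C) :
      Step cut
        [(insert (.at i (α.dia (.nom j))) (insert (.at i (β.dia (.nom k))) Γ),
          insert (.at i (b.node α β)) (insert (b.node (.nom j) (.nom k)) Δ))]
        (insert (.at i (α.dia (.nom j))) (insert (.at i (β.dia (.nom k))) Γ),
          insert (.at i (b.node α β)) Δ)
  | eqT {Γ Δ : Set (Node P N M C)} (i : N) (c : C) :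
      Step cut [(insert (.eq (.nom i) c (.nom i)) Γ, Δ)] (Γ, Δ)
  | eq5 {Γ Δ : Set (Node P N M C)} (i j k : N) (c : C) :
      Step cut
        [(insert (.eq (.nom j) c (.nom k))
            (insert (.eq (.nom i) c (.nom j)) (insert (.eq (.nom i) c (.nom k)) Γ)), Δ)]
        (insert (.eq (.nom i) c (.nom j)) (insert (.eq (.nom i) c (.nom k)) Γ), Δ)
  | neqL {Γ Δ : Set (Node P N M C)} (i j : N) (c : C) :
      Step cut [(Γ, insert (.eq (.nom i) c (.nom j)) Δ)]
        (insert (.neq (.nom i) c (.nom j)) Γ, Δ)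
  | neqR {Γ Δ : Set (Node P N M C)} (i j : N) (c : C) :
      Step cut [(insert (.eq (.nom i) c (.nom j)) Γ, Δ)]
        (Γ, insert (.neq (.nom i) c (.nom j)) Δ)
  | cutRule {Γ Δ Γ' Δ' : Set (Node P N M C)} (φ : Node P N M C)
      (ha : φ.Admissible) (hc : cut = true) :
      Step cut [(Γ, insert φ Δ), (insert φ Γ', Δ')] (Γ ∪ Γ', Δ ∪ Δ')
  | wl {Γ Δ : Set (Node P N M C)} (φ : Node P N M C) (ha : φ.Admissible) :
      Step cut [(Γ, Δ)] (insert φ Γ, Δ)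
  | wr {Γ Δ : Set (Node P N M C)} (φ : Node P N M C) (ha : φ.Admissible) :
      Step cut [(Γ, Δ)] (Γ, insert φ Δ)

/-- Derivability in G (`Deriv true`) resp. in G without (Cut) (`Deriv false`):
    a derivation built from the rules whose leaves are instances of the
    zero-premiss rules (Ax) or (⊥). -/
inductive Deriv (cut : Bool) : Sequent P N M C → Prop where
  | step {prems : List (Sequent P N M C)} {concl : Sequent P N M C}
      (h : Step cut prems concl) (ih : ∀ s ∈ prems, Deriv cut s) : Deriv cut concl

/-- Γ ⊢_G Δ : the sequent is provable in G. -/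
def ProvableG (Γ Δ : Set (Node P N M C)) : Prop := Deriv true (Γ, Δ)

/-- M ⊩ φ : global satisfaction. -/
def Model.satG (𝔐 : Model P N M C) (φ : Node P N M C) : Prop := ∀ n, 𝔐.sat φ n

/-- Validity of a sequent. -/
def ValidSeq (S : Sequent P N M C) : Prop :=
  ∀ 𝔐 : Model P N M C, (∀ γ ∈ S.1, 𝔐.satG γ) → ∃ δ ∈ S.2, 𝔐.satG δ

/-- Formulas of the basic hybrid logic H(@): no data comparisons. -/
def Node.IsHybrid : Node P N M C → Prop
  | .prop _ => True
  | .nom _ => True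
  | .bot => True
  | .impl φ ψ => φ.IsHybrid ∧ ψ.IsHybrid
  | .at _ φ => φ.IsHybrid
  | .dia _ φ => φ.IsHybrid
  | .eq _ _ _ => False
  | .neq _ _ _ => False

section Soundness

/-- Replace the assignment of a model. -/
def Model.upd (𝔐 : Model P N M C) (g' : N → 𝔐.W) : Model P N M C :=
  { 𝔐 with g := g' }

mutual
theorem satPath_upd (𝔐 : Model P N M C) (g' : N → 𝔐.W) :
    ∀ (α : Path P N M C), (∀ i ∈ α.noms, g' i = 𝔐.g i) →
      ∀ n n' : 𝔐.W, (𝔐.upd g').satPath α n n' ↔ 𝔐.satPath α n n'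
  | .mod a, _, n, n' => Iff.rfl
  | .nom i, h, n, n' => by
      simp only [Model.satPath, Model.upd]
      rw [h i (by simp [Path.noms])]
  | .test φ, h, n, n' => by
      simp only [Model.satPath]
      rw [sat_upd 𝔐 g' φ (by simpa [Path.noms] using h) n]
      exact Iff.rfl
  | .comp α β, h, n, n' => by
      simp only [Model.satPath]
      constructor <;> rintro ⟨m, h1, h2⟩ <;> refine ⟨m, ?_, ?_⟩
      · exact (satPath_upd 𝔐 g' α (fun i hi => h i (by simp [Path.noms, hi])) n m).1 h1
      · exact (satPath_upd 𝔐 g' β (fun i hi => h i (by simp [Path.noms, hi])) m n').1 h2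
      · exact (satPath_upd 𝔐 g' α (fun i hi => h i (by simp [Path.noms, hi])) n m).2 h1
      · exact (satPath_upd 𝔐 g' β (fun i hi => h i (by simp [Path.noms, hi])) m n').2 h2

theorem sat_upd (𝔐 : Model P N M C) (g' : N → 𝔐.W) :
    ∀ (φ : Node P N M C), (∀ i ∈ φ.noms, g' i = 𝔐.g i) →
      ∀ n : 𝔐.W, (𝔐.upd g').sat φ n ↔ 𝔐.sat φ n
  | .prop p, _, n => Iff.rfl
  | .nom i, h, n => by
      simp only [Model.sat, Model.upd]
      rw [h i (by simp [Node.noms])]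
  | .bot, _, n => Iff.rfl
  | .impl φ ψ, h, n => by
      simp only [Model.sat]
      rw [sat_upd 𝔐 g' φ (fun i hi => h i (by simp [Node.noms, hi])) n,
          sat_upd 𝔐 g' ψ (fun i hi => h i (by simp [Node.noms, hi])) n]
  | .at i φ, h, n => by
      simp only [Model.sat]
      show (𝔐.upd g').sat φ (g' i) ↔ _
      rw [sat_upd 𝔐 g' φ (fun j hj => h j (by simp [Node.noms, hj])) (g' i),
          h i (by simp [Node.noms])]
  | .dia a φ, h, n => by
      simp only [Model.sat, Model.upd]
      constructor <;> rintro ⟨m, h1, h2⟩ <;>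
        exact ⟨m, h1, by
          first
          | exact (sat_upd 𝔐 g' φ (fun i hi => h i (by simp [Node.noms, hi])) m).1 h2
          | exact (sat_upd 𝔐 g' φ (fun i hi => h i (by simp [Node.noms, hi])) m).2 h2⟩
  | .eq α c β, h, n => by
      simp only [Model.sat, Model.upd]
      constructor <;> rintro ⟨m, m', h1, h2, h3⟩ <;> refine ⟨m, m', ?_, ?_, h3⟩
      · exact (satPath_upd 𝔐 g' α (fun i hi => h i (by simp [Node.noms, hi])) n m).1 h1
      · exact (satPath_upd 𝔐 g' β (fun i hi => h i (by simp [Node.noms, hi])) n m').1 h2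
      · exact (satPath_upd 𝔐 g' α (fun i hi => h i (by simp [Node.noms, hi])) n m).2 h1
      · exact (satPath_upd 𝔐 g' β (fun i hi => h i (by simp [Node.noms, hi])) n m').2 h2
  | .neq α c β, h, n => by
      simp only [Model.sat, Model.upd]
      constructor <;> rintro ⟨m, m', h1, h2, h3⟩ <;> refine ⟨m, m', ?_, ?_, h3⟩
      · exact (satPath_upd 𝔐 g' α (fun i hi => h i (by simp [Node.noms, hi])) n m).1 h1
      · exact (satPath_upd 𝔐 g' β (fun i hi => h i (by simp [Node.noms, hi])) n m').1 h2
      · exact (satPath_upd 𝔐 g' α (fun i hi => h i (by simp [Node.noms, hi])) n m).2 h1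
      · exact (satPath_upd 𝔐 g' β (fun i hi => h i (by simp [Node.noms, hi])) n m').2 h2
end

theorem sat_pathDia (𝔐 : Model P N M C) :
    ∀ (α : Path P N M C) (φ : Node P N M C) (n : 𝔐.W),
      𝔐.sat (α.dia φ) n ↔ ∃ n', 𝔐.satPath α n n' ∧ 𝔐.sat φ n'
  | .mod a, φ, n => by simp [Path.dia, Model.sat, Model.satPath]
  | .nom i, φ, n => by simp [Path.dia, Model.sat, Model.satPath]
  | .test ψ, φ, n => by
      simp only [Path.dia, Node.and, Node.neg, Model.sat, Model.satPath]
      constructor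
      · intro h
        by_cases hψ : 𝔐.sat ψ n
        · by_cases hφ : 𝔐.sat φ n
          · exact ⟨n, ⟨rfl, hψ⟩, hφ⟩
          · exact ((h fun _ h2 => hφ h2)).elim
        · exact ((h fun h1 => (hψ h1).elim)).elim
      · rintro ⟨n', ⟨rfl, hψ⟩, hφ⟩ h
        exact h hψ hφ
  | .comp α β, φ, n => by
      simp only [Path.dia]
      rw [sat_pathDia 𝔐 α (β.dia φ) n]
      simp only [Model.satPath]
      constructor
      · rintro ⟨m, h1, h2⟩
        obtain ⟨m', h3, h4⟩ := (sat_pathDia 𝔐 β φ m).1 h2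
        exact ⟨m', ⟨m, h1, h3⟩, h4⟩
      · rintro ⟨m', ⟨m, h1, h3⟩, h4⟩
        exact ⟨m, h1, (sat_pathDia 𝔐 β φ m).2 ⟨m', h3, h4⟩⟩

lemma sat_const {𝔐 : Model P N M C} {φ : Node P N M C} {Q : Prop}
    (h : ∀ n, 𝔐.sat φ n ↔ Q) : 𝔐.satG φ ↔ Q := by
  obtain ⟨n⟩ := 𝔐.nonempty
  exact ⟨fun hg => (h n).1 (hg n), fun hq m => (h m).2 hq⟩

lemma satG_at {𝔐 : Model P N M C} {i : N} {φ : Node P N M C} :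
    𝔐.satG (.at i φ) ↔ 𝔐.sat φ (𝔐.g i) :=
  sat_const (fun n => by simp [Model.sat])

lemma satG_atnom {𝔐 : Model P N M C} {i j : N} :
    𝔐.satG (.at i (.nom j)) ↔ 𝔐.g j = 𝔐.g i :=
  sat_const (fun n => by simp [Model.sat])

lemma satG_atdianom {𝔐 : Model P N M C} {i j : N} {a : M} :
    𝔐.satG (.at i (.dia a (.nom j))) ↔ 𝔐.R a (𝔐.g i) (𝔐.g j) :=
  sat_const (fun n => by simp [Model.sat])

lemma satG_eqnom {𝔐 : Model P N M C} {i j : N} {c : C} :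
    𝔐.satG (.eq (.nom i) c (.nom j)) ↔ 𝔐.E c (𝔐.g i) (𝔐.g j) :=
  sat_const (fun n => by simp [Model.sat, Model.satPath])

lemma satG_neqnom {𝔐 : Model P N M C} {i j : N} {c : C} :
    𝔐.satG (.neq (.nom i) c (.nom j)) ↔ ¬ 𝔐.E c (𝔐.g i) (𝔐.g j) :=
  sat_const (fun n => by simp [Model.sat, Model.satPath])

lemma satG_upd {𝔐 : Model P N M C} {g' : N → 𝔐.W} {φ : Node P N M C}
    (h : ∀ i ∈ φ.noms, g' i = 𝔐.g i) : (𝔐.upd g').satG φ ↔ 𝔐.satG φ :=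
  forall_congr' (fun n => sat_upd 𝔐 g' φ h n)

lemma update_agree {W : Type} [DecidableEq N] {g : N → W} {j : N} {w : W} {s : Set N}
    (h : j ∉ s) : ∀ i ∈ s, Function.update g j w i = g i := by
  intro i hi
  rw [Function.update_of_ne]
  rintro rfl
  exact h hi

def Comparison.holds (𝔐 : Model P N M C) : Comparison C → 𝔐.W → 𝔐.W → Prop
  | .ceq c, w, w' => 𝔐.E c w w'
  | .cneq c, w, w' => ¬ 𝔐.E c w w'

lemma sat_cmpnode (𝔐 : Model P N M C) (b : Comparison C) (α β : Path P N M C) (n : 𝔐.W) :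
    𝔐.sat (b.node α β) n ↔
      ∃ n' n'', 𝔐.satPath α n n' ∧ 𝔐.satPath β n n'' ∧ Comparison.holds 𝔐 b n' n'' := by
  cases b <;> simp [Comparison.node, Comparison.holds, Model.sat]

lemma noms_cmpnode (b : Comparison C) (α β : Path P N M C) :
    (b.node α β).noms = α.noms ∪ β.noms := by
  cases b <;> simp [Comparison.node, Node.noms]

lemma satG_cmpnomnom {𝔐 : Model P N M C} {b : Comparison C} {j k : N} :
    𝔐.satG (b.node (.nom j) (.nom k)) ↔ Comparison.holds 𝔐 b (𝔐.g j) (𝔐.g k) :=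
  sat_const (fun n => by rw [sat_cmpnode]; simp [Model.satPath])

lemma holds_upd {𝔐 : Model P N M C} {g' : N → 𝔐.W} {b : Comparison C} {w w' : 𝔐.W} :
    Comparison.holds (𝔐.upd g') b w w' ↔ Comparison.holds 𝔐 b w w' := by
  cases b <;> exact Iff.rfl

theorem deriv_valid {cut : Bool} {s : Sequent P N M C} (h : Deriv cut s) : ValidSeq s := by
  classical
  induction h with
  | step hstep hder ih =>
    cases hstep with
    | @ax Γ Δ φ hφ =>
      intro 𝔐 hant
      exact ⟨φ, Set.mem_insert _ _, hant φ (Set.mem_insert _ _)⟩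
    | @bot Γ Δ i =>
      intro 𝔐 hant
      have h0 := satG_at.mp (hant _ (Set.mem_insert _ _))
      simp [Model.sat] at h0
    | @implL Γ Δ i φ ψ =>
      intro 𝔐 hant
      have himp := satG_at.mp (hant _ (Set.mem_insert _ _))
      have hΓ : ∀ γ ∈ Γ, 𝔐.satG γ := fun γ hγ => hant γ (Set.mem_insert_of_mem _ hγ)
      simp only [Model.sat] at himp
      obtain ⟨δ, hδ, hδs⟩ := ih _ (List.mem_cons_self) 𝔐 hΓ
      rcases Set.mem_insert_iff.1 hδ with rfl | hδ
      · refine ih _ (List.mem_cons_of_mem _ (List.mem_cons_self)) 𝔐 (Set.forall_mem_insert.mpr ⟨?_, hΓ⟩)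
        exact satG_at.mpr (himp (satG_at.mp hδs))
      · exact ⟨δ, hδ, hδs⟩
    | @implR Γ Δ i φ ψ =>
      intro 𝔐 hant
      by_cases hφ : 𝔐.sat φ (𝔐.g i)
      · obtain ⟨δ, hδ, hδs⟩ := ih _ (List.mem_cons_self) 𝔐
          (Set.forall_mem_insert.mpr ⟨satG_at.mpr hφ, hant⟩)
        rcases Set.mem_insert_iff.1 hδ with rfl | hδ
        · refine ⟨_, Set.mem_insert _ _, satG_at.mpr ?_⟩
          simp only [Model.sat]
          exact fun _ => satG_at.mp hδs
        · exact ⟨δ, Set.mem_insert_of_mem _ hδ, hδs⟩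
      · refine ⟨_, Set.mem_insert _ _, satG_at.mpr ?_⟩
        simp only [Model.sat]
        exact fun h => (hφ h).elim
    | @atT Γ Δ i =>
      intro 𝔐 hant
      exact ih _ (List.mem_cons_self) 𝔐 (Set.forall_mem_insert.mpr ⟨satG_atnom.mpr rfl, hant⟩)
    | @at5 Γ Δ i j k =>
      intro 𝔐 hant
      have h1 := satG_atnom.mp (hant _ (Set.mem_insert _ _))
      have h2 := satG_atnom.mp (hant _ (Set.mem_insert_of_mem _ (Set.mem_insert _ _)))
      refine ih _ (List.mem_cons_self) 𝔐 (Set.forall_mem_insert.mpr ⟨satG_atnom.mpr ?_, hant⟩)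
      rw [h1, h2]
    | @nomRule Γ Δ i j hj hj' =>
      intro 𝔐 hant
      set g' := Function.update 𝔐.g j (𝔐.g i) with hg'
      have hA : (𝔐.upd g').satG (Node.at i (Node.nom j)) := by
        refine satG_atnom.mpr ?_
        show g' j = g' i
        rcases eq_or_ne i j with rfl | hij
        · rfl
        · rw [hg', Function.update_self, Function.update_of_ne hij]
      have hB : ∀ γ ∈ Γ, (𝔐.upd g').satG γ :=
        fun γ hγ => (satG_upd (update_agree (hj γ hγ))).mpr (hant γ hγ)
      obtain ⟨δ, hδ, hδs⟩ := ih _ (List.mem_cons_self) (𝔐.upd g')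
        (Set.forall_mem_insert.mpr ⟨hA, hB⟩)
      exact ⟨δ, hδ, (satG_upd (update_agree (hj' δ hδ))).mp hδs⟩
    | @s1 Γ Δ i j φ hφ =>
      intro 𝔐 hant
      have h1 := satG_atnom.mp (hant _ (Set.mem_insert _ _))
      have h2 := satG_at.mp (hant _ (Set.mem_insert_of_mem _ (Set.mem_insert _ _)))
      refine ih _ (List.mem_cons_self) 𝔐 (Set.forall_mem_insert.mpr ⟨satG_at.mpr ?_, hant⟩)
      rw [h1]; exact h2
    | @s2 Γ Δ i j k a =>
      intro 𝔐 hant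
      have h1 := satG_atnom.mp (hant _ (Set.mem_insert _ _))
      have h2 := satG_atdianom.mp (hant _ (Set.mem_insert_of_mem _ (Set.mem_insert _ _)))
      refine ih _ (List.mem_cons_self) 𝔐 (Set.forall_mem_insert.mpr ⟨satG_atdianom.mpr ?_, hant⟩)
      rw [h1]; exact h2
    | @s3 Γ Δ i j k c =>
      intro 𝔐 hant
      have h1 := satG_atnom.mp (hant _ (Set.mem_insert _ _))
      have h2 := satG_eqnom.mp (hant _ (Set.mem_insert_of_mem _ (Set.mem_insert _ _)))
      refine ih _ (List.mem_cons_self) 𝔐 (Set.forall_mem_insert.mpr ⟨satG_eqnom.mpr ?_, hant⟩)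
      rw [h1]; exact h2
    | @atL Γ Δ i j φ =>
      intro 𝔐 hant
      have h0 := satG_at.mp (hant _ (Set.mem_insert _ _))
      simp only [Model.sat] at h0
      refine ih _ (List.mem_cons_self) 𝔐 (Set.forall_mem_insert.mpr ⟨satG_at.mpr h0,
        fun γ hγ => hant γ (Set.mem_insert_of_mem _ hγ)⟩)
    | @atR Γ Δ i j φ =>
      intro 𝔐 hant
      obtain ⟨δ, hδ, hδs⟩ := ih _ (List.mem_cons_self) 𝔐 hant
      rcases Set.mem_insert_iff.1 hδ with rfl | hδ
      · refine ⟨_, Set.mem_insert _ _, satG_at.mpr ?_⟩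
        simp only [Model.sat]
        exact satG_at.mp hδs
      · exact ⟨δ, Set.mem_insert_of_mem _ hδ, hδs⟩
    | @diaL Γ Δ i j a φ hj hj' =>
      intro 𝔐 hant
      have hd := satG_at.mp (hant _ (Set.mem_insert _ _))
      simp only [Model.sat] at hd
      obtain ⟨w, hR, hw⟩ := hd
      have hjf := hj _ (Set.mem_insert _ _)
      simp only [Node.noms, Set.mem_insert_iff, not_or] at hjf
      set g' := Function.update 𝔐.g j w with hg'
      have hA : (𝔐.upd g').satG (Node.at i (Node.dia a (Node.nom j))) := by
        refine satG_atdianom.mpr ?_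
        show 𝔐.R a (g' i) (g' j)
        rw [hg', Function.update_self, Function.update_of_ne (Ne.symm hjf.1)]
        exact hR
      have hB : (𝔐.upd g').satG (Node.at j φ) := by
        refine satG_at.mpr ?_
        show (𝔐.upd g').sat φ (g' j)
        rw [hg', Function.update_self]
        exact (sat_upd 𝔐 g' φ (update_agree hjf.2) w).mpr hw
      have hC : ∀ γ ∈ Γ, (𝔐.upd g').satG γ := fun γ hγ =>
          (satG_upd (update_agree (hj γ (Set.mem_insert_of_mem _ hγ)))).mpr
            (hant γ (Set.mem_insert_of_mem _ hγ))
      obtain ⟨δ, hδ, hδs⟩ := ih _ (List.mem_cons_self) (𝔐.upd g')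
        (Set.forall_mem_insert.mpr ⟨hA, Set.forall_mem_insert.mpr ⟨hB, hC⟩⟩)
      exact ⟨δ, hδ, (satG_upd (update_agree (hj' δ hδ))).mp hδs⟩
    | @diaR Γ Δ i j a φ =>
      intro 𝔐 hant
      have hR := satG_atdianom.mp (hant _ (Set.mem_insert _ _))
      obtain ⟨δ, hδ, hδs⟩ := ih _ (List.mem_cons_self) 𝔐 hant
      rcases Set.mem_insert_iff.1 hδ with rfl | hδ
      · exact ⟨_, Set.mem_insert _ _, hδs⟩
      rcases Set.mem_insert_iff.1 hδ with rfl | hδ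
      · refine ⟨_, Set.mem_insert _ _, satG_at.mpr ?_⟩
        simp only [Model.sat]
        exact ⟨𝔐.g j, hR, satG_at.mp hδs⟩
      · exact ⟨δ, Set.mem_insert_of_mem _ hδ, hδs⟩
    | @cmpL Γ Δ i j k α β b hjk hj hj' hk hk' =>
      intro 𝔐 hant
      have hd := satG_at.mp (hant _ (Set.mem_insert _ _))
      rw [sat_cmpnode] at hd
      obtain ⟨n1, n2, hα, hβ, hE⟩ := hd
      have hjf := hj _ (Set.mem_insert _ _)
      have hkf := hk _ (Set.mem_insert _ _)
      simp only [Node.noms, noms_cmpnode, Set.mem_insert_iff, Set.mem_union, not_or] at hjf hkf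
      set g' := Function.update (Function.update 𝔐.g j n1) k n2 with hg'
      have agree : ∀ s : Set N, j ∉ s → k ∉ s → ∀ m ∈ s, g' m = 𝔐.g m := by
        intro s hjs hks m hm
        rw [hg', Function.update_of_ne (by rintro rfl; exact hks hm),
            Function.update_of_ne (by rintro rfl; exact hjs hm)]
      have hg'j : g' j = n1 := by
        rw [hg', Function.update_of_ne hjk, Function.update_self]
      have hg'k : g' k = n2 := by rw [hg', Function.update_self]
      have hg'i : g' i = 𝔐.g i := by
        rw [hg', Function.update_of_ne (Ne.symm hkf.1), Function.update_of_ne (Ne.symm hjf.1)]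
      have hA : (𝔐.upd g').satG (Node.at i (α.dia (Node.nom j))) := by
        refine satG_at.mpr ?_
        show (𝔐.upd g').sat (α.dia (.nom j)) (g' i)
        rw [hg'i]; refine (sat_pathDia (𝔐.upd g') _ _ _).mpr ?_
        refine ⟨n1, (satPath_upd 𝔐 g' α (agree _ hjf.2.1 hkf.2.1) _ _).mpr hα, ?_⟩
        show g' j = n1
        exact hg'j
      have hB : (𝔐.upd g').satG (Node.at i (β.dia (Node.nom k))) := by
        refine satG_at.mpr ?_
        show (𝔐.upd g').sat (β.dia (.nom k)) (g' i)
        rw [hg'i]; refine (sat_pathDia (𝔐.upd g') _ _ _).mpr ?_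
        refine ⟨n2, (satPath_upd 𝔐 g' β (agree _ hjf.2.2 hkf.2.2) _ _).mpr hβ, ?_⟩
        show g' k = n2
        exact hg'k
      have hC : (𝔐.upd g').satG (b.node (Path.nom j) (Path.nom k)) := by
        refine satG_cmpnomnom.mpr ?_
        refine holds_upd.mpr ?_
        show Comparison.holds 𝔐 b (g' j) (g' k)
        rw [hg'j, hg'k]
        exact hE
      have hD : ∀ γ ∈ Γ, (𝔐.upd g').satG γ := fun γ hγ =>
          (satG_upd (agree _ (hj γ (Set.mem_insert_of_mem _ hγ))
            (hk γ (Set.mem_insert_of_mem _ hγ)))).mpr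
            (hant γ (Set.mem_insert_of_mem _ hγ))
      obtain ⟨δ, hδ, hδs⟩ := ih _ (List.mem_cons_self) (𝔐.upd g')
        (Set.forall_mem_insert.mpr ⟨hA, Set.forall_mem_insert.mpr ⟨hB,
          Set.forall_mem_insert.mpr ⟨hC, hD⟩⟩⟩)
      exact ⟨δ, hδ, (satG_upd (fun m hm => agree _ (hj' δ hδ) (hk' δ hδ) m hm)).mp hδs⟩
    | @cmpR Γ Δ i j k α β b =>
      intro 𝔐 hant
      have h1 := satG_at.mp (hant _ (Set.mem_insert _ _))
      have h2 := satG_at.mp (hant _ (Set.mem_insert_of_mem _ (Set.mem_insert _ _)))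
      rw [sat_pathDia] at h1 h2
      obtain ⟨m1, hm1, he1⟩ := h1
      obtain ⟨m2, hm2, he2⟩ := h2
      simp only [Model.sat] at he1 he2
      obtain ⟨δ, hδ, hδs⟩ := ih _ (List.mem_cons_self) 𝔐 hant
      rcases Set.mem_insert_iff.1 hδ with rfl | hδ
      · exact ⟨_, Set.mem_insert _ _, hδs⟩
      rcases Set.mem_insert_iff.1 hδ with rfl | hδ
      · refine ⟨_, Set.mem_insert _ _, satG_at.mpr ?_⟩
        rw [sat_cmpnode]
        refine ⟨𝔐.g j, 𝔐.g k, ?_, ?_, satG_cmpnomnom.mp hδs⟩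
        · rwa [he1]
        · rwa [he2]
      · exact ⟨δ, Set.mem_insert_of_mem _ hδ, hδs⟩
    | @eqT Γ Δ i c =>
      intro 𝔐 hant
      exact ih _ (List.mem_cons_self) 𝔐
        (Set.forall_mem_insert.mpr ⟨satG_eqnom.mpr ((𝔐.E_equiv c).refl _), hant⟩)
    | @eq5 Γ Δ i j k c =>
      intro 𝔐 hant
      have h1 := satG_eqnom.mp (hant _ (Set.mem_insert _ _))
      have h2 := satG_eqnom.mp (hant _ (Set.mem_insert_of_mem _ (Set.mem_insert _ _)))
      refine ih _ (List.mem_cons_self) 𝔐 (Set.forall_mem_insert.mpr ⟨satG_eqnom.mpr ?_, hant⟩)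
      exact (𝔐.E_equiv c).trans ((𝔐.E_equiv c).symm h1) h2
    | @neqL Γ Δ i j c =>
      intro 𝔐 hant
      have hne := satG_neqnom.mp (hant _ (Set.mem_insert _ _))
      obtain ⟨δ, hδ, hδs⟩ := ih _ (List.mem_cons_self) 𝔐
        (fun γ hγ => hant γ (Set.mem_insert_of_mem _ hγ))
      rcases Set.mem_insert_iff.1 hδ with rfl | hδ
      · exact absurd (satG_eqnom.mp hδs) hne
      · exact ⟨δ, hδ, hδs⟩
    | @neqR Γ Δ i j c =>
      intro 𝔐 hant
      by_cases hE : 𝔐.E c (𝔐.g i) (𝔐.g j)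
      · obtain ⟨δ, hδ, hδs⟩ := ih _ (List.mem_cons_self) 𝔐
          (Set.forall_mem_insert.mpr ⟨satG_eqnom.mpr hE, hant⟩)
        exact ⟨δ, Set.mem_insert_of_mem _ hδ, hδs⟩
      · exact ⟨_, Set.mem_insert _ _, satG_neqnom.mpr hE⟩
    | @cutRule Γ Δ Γ' Δ' φ ha hc =>
      intro 𝔐 hant
      obtain ⟨δ, hδ, hδs⟩ := ih _ (List.mem_cons_self) 𝔐
        (fun γ hγ => hant γ (Set.mem_union_left _ hγ))
      rcases Set.mem_insert_iff.1 hδ with rfl | hδ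
      · obtain ⟨δ', hδ', hδs'⟩ := ih _ (List.mem_cons_of_mem _ (List.mem_cons_self)) 𝔐
          (Set.forall_mem_insert.mpr ⟨hδs, fun γ hγ => hant γ (Set.mem_union_right _ hγ)⟩)
        exact ⟨δ', Set.mem_union_right _ hδ', hδs'⟩
      · exact ⟨δ, Set.mem_union_left _ hδ, hδs⟩
    | @wl Γ Δ φ ha =>
      intro 𝔐 hant
      exact ih _ (List.mem_cons_self) 𝔐 (fun γ hγ => hant γ (Set.mem_insert_of_mem _ hγ))
    | @wr Γ Δ φ ha =>
      intro 𝔐 hant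
      obtain ⟨δ, hδ, hδs⟩ := ih _ (List.mem_cons_self) 𝔐 hant
      exact ⟨δ, Set.mem_insert_of_mem _ hδ, hδs⟩

end Soundness

/-- soundness of G. -/
theorem soundness {P N M C : Type} [Countable P] [Infinite P] [Countable N] [Infinite N] [Finite M] [Finite C]
    {Γ Δ : Set (Node P N M C)}
    (hGfin : Γ.Finite) (hDfin : Δ.Finite)
    (hGadm : ∀ ψ ∈ Γ, ψ.Admissible) (hDadm : ∀ ψ ∈ Δ, ψ.Admissible)
    (h : ProvableG Γ Δ) :
    ∀ 𝔐 : Model P N M C, (∀ γ ∈ Γ, 𝔐.satG γ) → ∃ δ ∈ Δ, 𝔐.satG δ :=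
  deriv_valid h

end HXPathD
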